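/- Let n, n₀, …, n_μ be positive integers with n ≥ n₀, with 4·n_{ν+1} ≤ n_ν for each 0 ≤ ν < μ, and with n_μ ≥ 1. Suppose that for each ν ∈ {0, …, μ} there exist: (i) a binary constant-weight code C_ν of length n in which every codeword has weight exactly n_ν and any two distinct codewords are at Hamming distance at least n_ν, with |C_ν| = M_ν; and (ii) a binary code S_ν of length n_ν in which any two distinct codewords are at Hamming distance at least ⌈n_ν/4⌉, with |S_ν| = K_ν. Then there exists a kissing configuration of size Σ_{ν=0}^{μ} M_ν · K_ν in dimension n with common norm √n₀; concretely, there is a set of Σ_ν M_ν K_ν points in EuclideanSpace ℝ (Fin n), each of Euclidean norm √n₀, such that any two distinct points are at Euclidean distance at least √n₀. (The points of level ν have exactly n_ν nonzero coordinates, each equal to ±√(n₀/n_ν), with support given by a codeword of C_ν and signs, read along the support in increasing coordinate order, given by a codeword of S_ν.) -/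

import Mathlib

open Finset

noncomputable def sgn2 (z : ZMod 2) : ℝ := if z = 0 then 1 else -1

lemma sgn2_sq (z : ZMod 2) : sgn2 z ^ 2 = 1 := by
  unfold sgn2; split <;> norm_num

lemma sgn2_abs (z : ZMod 2) : |sgn2 z| = 1 := by
  unfold sgn2; split <;> norm_num

lemma sgn2_ne_zero (z : ZMod 2) : sgn2 z ≠ 0 := by
  unfold sgn2; split <;> norm_num

lemma sgn2_diff_sq {z w : ZMod 2} (h : z ≠ w) : (sgn2 z - sgn2 w)^2 = 4 := by
  have hzw : z = 0 ∧ w = 1 ∨ z = 1 ∧ w = 0 := by revert h z w; decide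
  rcases hzw with ⟨rfl, rfl⟩ | ⟨rfl, rfl⟩ <;> simp [sgn2] <;> norm_num

/-- The point associated to a support vector `c` and a sign vector `t`. -/
noncomputable def bpt (n : ℕ) (a : ℝ) (c t : Fin n → ZMod 2) : EuclideanSpace ℝ (Fin n) :=
  WithLp.toLp 2 (fun i => if c i ≠ 0 then sgn2 (t i) * a else 0)

lemma bpt_apply (n : ℕ) (a : ℝ) (c t : Fin n → ZMod 2) (i : Fin n) :
    bpt n a c t i = if c i ≠ 0 then sgn2 (t i) * a else 0 := rfl

lemma bpt_abs_le (n : ℕ) {a : ℝ} (ha : 0 ≤ a) (c t : Fin n → ZMod 2) (i : Fin n) :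
    |bpt n a c t i| ≤ a := by
  rw [bpt_apply]; split
  · rw [abs_mul, sgn2_abs, one_mul, abs_of_nonneg ha]
  · simpa using ha

lemma sum_sq_bpt (n : ℕ) (a : ℝ) (c t : Fin n → ZMod 2) :
    ∑ i, (bpt n a c t i)^2 = (hammingNorm c : ℝ) * a^2 := by
  classical
  have : ∀ i, (bpt n a c t i)^2 = if c i ≠ 0 then a^2 else 0 := by
    intro i; rw [bpt_apply]; split <;> simp [mul_pow, sgn2_sq]
  rw [Finset.sum_congr rfl fun i _ => this i, Finset.sum_ite, Finset.sum_const,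
    Finset.sum_const]
  simp [hammingNorm, nsmul_eq_mul]

/-- Extend a sign word on `Fin w` to the support of `c` (in increasing order). -/
noncomputable def extSign {n w : ℕ} (c : Fin n → ZMod 2) (s : Fin w → ZMod 2) :
    Fin n → ZMod 2 := fun i =>
  if h : ({j | c j ≠ 0} : Finset (Fin n)).card = w ∧ c i ≠ 0
    then s ((({j | c j ≠ 0} : Finset (Fin n)).orderIsoOfFin h.1).symm
        ⟨i, by simp [h.2]⟩)
    else 0

lemma extSign_orderIso {n w : ℕ} (c : Fin n → ZMod 2)
    (hc : ({j | c j ≠ 0} : Finset (Fin n)).card = w) (s : Fin w → ZMod 2) (j : Fin w) :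
    extSign c s ((({j | c j ≠ 0} : Finset (Fin n)).orderIsoOfFin hc j : Fin n)) = s j := by
  set e := ({j | c j ≠ 0} : Finset (Fin n)).orderIsoOfFin hc
  have hmem : ((e j : Fin n)) ∈ ({j | c j ≠ 0} : Finset (Fin n)) := (e j).2
  have hne : c (e j : Fin n) ≠ 0 := (Finset.mem_filter.mp hmem).2
  rw [extSign, dif_pos ⟨hc, hne⟩]
  congr 1
  have : (⟨(e j : Fin n), by simp [hne]⟩ : {x // x ∈ ({j | c j ≠ 0} : Finset (Fin n))}) = e j := by
    ext; rfl
  rw [this, OrderIso.symm_apply_apply]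

lemma card_extSign_ne {n w : ℕ} (c : Fin n → ZMod 2)
    (hc : ({j | c j ≠ 0} : Finset (Fin n)).card = w) (s s' : Fin w → ZMod 2) :
    ({i | c i ≠ 0 ∧ extSign c s i ≠ extSign c s' i} : Finset (Fin n)).card
      = hammingDist s s' := by
  classical
  rw [hammingDist]
  set e := ({j | c j ≠ 0} : Finset (Fin n)).orderIsoOfFin hc
  apply Finset.card_bij (fun i hi => (e.symm ⟨i, by
    simp only [Finset.mem_filter, Finset.mem_univ, true_and] at hi
    simp [hi.1]⟩))
  · intro i hi
    simp only [Finset.mem_filter, Finset.mem_univ, true_and] at hi ⊢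
    obtain ⟨h1, h2⟩ := hi
    set j := e.symm ⟨i, by simp [h1]⟩ with hj
    have : (e j : Fin n) = i := by rw [hj, OrderIso.apply_symm_apply]
    rw [← this] at h2
    rwa [extSign_orderIso c hc s, extSign_orderIso c hc s'] at h2
  · intro i hi i' hi' hee
    simp only [Finset.mem_filter, Finset.mem_univ, true_and] at hi hi'
    have := congrArg (fun j => ((e j : Fin n))) hee
    simpa [OrderIso.apply_symm_apply] using this
  · intro j hj
    simp only [Finset.mem_filter, Finset.mem_univ, true_and] at hj
    refine ⟨(e j : Fin n), ?_, ?_⟩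
    · have hne : c (e j : Fin n) ≠ 0 := (Finset.mem_filter.mp (e j).2).2
      simp only [Finset.mem_filter, Finset.mem_univ, true_and]
      exact ⟨hne, by rwa [extSign_orderIso c hc s, extSign_orderIso c hc s']⟩
    · have h0 : (⟨(e j : Fin n), by
          exact Finset.mem_filter.mpr ⟨Finset.mem_univ _, (Finset.mem_filter.mp (e j).2).2⟩⟩ :
          {x // x ∈ ({j | c j ≠ 0} : Finset (Fin n))}) = e j := Subtype.ext rfl
      rw [h0]
      exact e.symm_apply_apply j

/-- distance bound, same support, different signs -/
lemma dist_sq_same_support {n w : ℕ} (a : ℝ) (c : Fin n → ZMod 2)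
    (hc : ({j | c j ≠ 0} : Finset (Fin n)).card = w) (s s' : Fin w → ZMod 2) :
    ∑ i, (bpt n a c (extSign c s) i - bpt n a c (extSign c s') i)^2
      = 4 * a^2 * hammingDist s s' := by
  classical
  have : ∀ i, (bpt n a c (extSign c s) i - bpt n a c (extSign c s') i)^2
      = if c i ≠ 0 ∧ extSign c s i ≠ extSign c s' i then 4 * a^2 else 0 := by
    intro i
    rw [bpt_apply, bpt_apply]
    by_cases h : c i ≠ 0
    · rw [if_pos h, if_pos h]
      by_cases h2 : extSign c s i = extSign c s' i
      · simp [h2, h]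
      · rw [if_pos ⟨h, h2⟩, ← sub_mul, mul_pow, sgn2_diff_sq h2]
    · simp [h]
  rw [Finset.sum_congr rfl fun i _ => this i, Finset.sum_ite, Finset.sum_const,
    Finset.sum_const, ← card_extSign_ne c hc s s']
  simp [nsmul_eq_mul]
  ring

lemma zmod2_eq_one {z : ZMod 2} (h : z ≠ 0) : z = 1 := by
  revert h z; decide

/-- distance bound, different supports, same scaling -/
lemma dist_sq_diff_support {n : ℕ} (a : ℝ) (c c' t t' : Fin n → ZMod 2) :
    (hammingDist c c' : ℝ) * a^2 ≤ ∑ i, (bpt n a c t i - bpt n a c' t' i)^2 := by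
  classical
  have h1 : ∀ i ∈ ({i | c i ≠ c' i} : Finset (Fin n)),
      a^2 ≤ (bpt n a c t i - bpt n a c' t' i)^2 := by
    intro i hi
    have h : c i ≠ c' i := by
      simpa using (Finset.mem_filter.mp hi).2
    rw [bpt_apply, bpt_apply]
    by_cases hci : c i = 0
    · have hci' : c' i ≠ 0 := fun hh => h (by rw [hci, hh])
      rw [if_neg (not_not.mpr hci), if_pos hci', zero_sub, neg_sq, mul_pow, sgn2_sq, one_mul]
    · by_cases hci' : c' i = 0
      · rw [if_pos hci, if_neg (not_not.mpr hci'), sub_zero, mul_pow, sgn2_sq, one_mul]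
      · exact absurd ((zmod2_eq_one hci).trans (zmod2_eq_one hci').symm) h
  calc (hammingDist c c' : ℝ) * a^2
      = ∑ _i ∈ ({i | c i ≠ c' i} : Finset (Fin n)), a^2 := by
        rw [hammingDist, Finset.sum_const, nsmul_eq_mul]
    _ ≤ ∑ i ∈ ({i | c i ≠ c' i} : Finset (Fin n)), (bpt n a c t i - bpt n a c' t' i)^2 :=
        Finset.sum_le_sum h1
    _ ≤ ∑ i, (bpt n a c t i - bpt n a c' t' i)^2 :=
        Finset.sum_le_sum_of_subset_of_nonneg (Finset.filter_subset _ _)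
          (fun i _ _ => sq_nonneg _)

/-- distance bound, different levels -/
lemma dist_sq_cross {n : ℕ} {a b : ℝ} (ha : 0 ≤ a) (hb : 0 ≤ b)
    (c t c' t' : Fin n → ZMod 2) :
    (hammingNorm c : ℝ) * a^2 + (hammingNorm c' : ℝ) * b^2
        - 2 * (hammingNorm c' : ℝ) * (a*b)
      ≤ ∑ i, (bpt n a c t i - bpt n b c' t' i)^2 := by
  classical
  set x := bpt n a c t
  set y := bpt n b c' t'
  have hexp : ∑ i, (x i - y i)^2 = (∑ i, (x i)^2) + (∑ i, (y i)^2) - 2 * ∑ i, x i * y i := by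
    rw [← Finset.sum_add_distrib, Finset.mul_sum, ← Finset.sum_sub_distrib]
    exact Finset.sum_congr rfl fun i _ => by ring
  have hxy : ∑ i, x i * y i ≤ (hammingNorm c' : ℝ) * (a*b) := by
    have : ∀ i, x i * y i ≤ if c' i ≠ 0 then a*b else 0 := by
      intro i
      split
      · calc x i * y i ≤ |x i * y i| := le_abs_self _
          _ = |x i| * |y i| := abs_mul _ _
          _ ≤ a * b := mul_le_mul (bpt_abs_le n ha c t i) (bpt_abs_le n hb c' t' i)
              (abs_nonneg _) ha
      · next h =>
          have : y i = 0 := by rw [not_not] at h; simp [y, bpt_apply, h]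
          simp [this]
    calc ∑ i, x i * y i ≤ ∑ i, if c' i ≠ 0 then a*b else 0 :=
          Finset.sum_le_sum fun i _ => this i
      _ = (hammingNorm c' : ℝ) * (a*b) := by
          rw [Finset.sum_ite, Finset.sum_const, Finset.sum_const, hammingNorm]
          simp [nsmul_eq_mul]
  rw [hexp, sum_sq_bpt, sum_sq_bpt]
  linarith

/-- The general construction: given, for each level `ν ∈ {0,…,μ}` of a chain of support
sizes `n ≥ n₀ ≥ 4n₁ ≥ … ≥ 4^μ n_μ ≥ 1`, a constant-weight binary code `C ν` of length `n`,
weight `ns ν` and minimum distance `ns ν` of size `M ν`, and a binary code `S ν` of length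
`ns ν` and minimum distance `⌈ns ν / 4⌉` of size `K ν`, there is a kissing configuration of
size `∑ ν, M ν * K ν` in dimension `n` with common norm `√n₀`, whose points of level `ν`
have exactly `ns ν` nonzero coordinates, each equal to `±√(n₀ / ns ν)`. -/
theorem kissing_configuration_from_codes
    (n μ : ℕ) (ns : Fin (μ + 1) → ℕ)
    (hn : 0 < n) (hpos : ∀ ν, 0 < ns ν)
    (hn0 : ns 0 ≤ n)
    (hchain : ∀ ν : Fin μ, 4 * ns ν.succ ≤ ns ν.castSucc)
    (M K : Fin (μ + 1) → ℕ)
    (C : Fin (μ + 1) → Finset (Fin n → ZMod 2))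
    (S : (ν : Fin (μ + 1)) → Finset (Fin (ns ν) → ZMod 2))
    (hCcard : ∀ ν, (C ν).card = M ν)
    (hCweight : ∀ ν, ∀ c ∈ C ν, hammingNorm c = ns ν)
    (hCdist : ∀ ν, ∀ c ∈ C ν, ∀ c' ∈ C ν, c ≠ c' → ns ν ≤ hammingDist c c')
    (hScard : ∀ ν, (S ν).card = K ν)
    (hSdist : ∀ ν, ∀ s ∈ S ν, ∀ s' ∈ S ν, s ≠ s' →
      (ns ν + 3) / 4 ≤ hammingDist s s') :
    ∃ X : Finset (EuclideanSpace ℝ (Fin n)),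
      X.card = ∑ ν, M ν * K ν ∧
      (∀ x ∈ X, ‖x‖ = Real.sqrt (ns 0)) ∧
      (∀ x ∈ X, ∀ y ∈ X, x ≠ y → Real.sqrt (ns 0) ≤ dist x y) ∧
      (∀ x ∈ X, ∃ ν : Fin (μ + 1),
        (Finset.univ.filter fun i => x i ≠ 0).card = ns ν ∧
        ∀ i, x i ≠ 0 →
          x i = Real.sqrt ((ns 0 : ℝ) / (ns ν)) ∨
          x i = -Real.sqrt ((ns 0 : ℝ) / (ns ν))) := by
  classical
  set a : Fin (μ+1) → ℝ := fun ν => Real.sqrt ((ns 0 : ℝ) / ns ν) with ha_def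
  have hdivpos : ∀ ν, (0:ℝ) < (ns 0 : ℝ) / ns ν := fun ν =>
    div_pos (by exact_mod_cast hpos 0) (by exact_mod_cast hpos ν)
  have hapos : ∀ ν, 0 < a ν := fun ν => Real.sqrt_pos.mpr (hdivpos ν)
  have ha2 : ∀ ν, (a ν)^2 = (ns 0 : ℝ) / ns ν := fun ν => Real.sq_sqrt (hdivpos ν).le
  have hanti : Antitone ns := Fin.antitone_iff_succ_le.mpr fun i =>
    le_trans (by omega : ns i.succ ≤ 4 * ns i.succ) (hchain i)
  have hfour : ∀ ν ν' : Fin (μ+1), ν < ν' → 4 * ns ν' ≤ ns ν := by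
    intro ν ν' h
    have hνμ : (ν : ℕ) < μ := lt_of_lt_of_le h (Nat.lt_succ_iff.mp ν'.isLt)
    set i : Fin μ := ⟨ν, hνμ⟩
    have h1 : i.castSucc = ν := by simp [i, Fin.ext_iff]
    have h2 : i.succ ≤ ν' := by
      rw [Fin.le_def]
      simpa [i, Fin.succ] using h
    calc 4 * ns ν' ≤ 4 * ns i.succ := by
          have := hanti h2; omega
      _ ≤ ns i.castSucc := hchain i
      _ = ns ν := by rw [h1]
  -- the parameter space and map
  set F : (Σ ν : Fin (μ+1), (Fin n → ZMod 2) × (Fin (ns ν) → ZMod 2)) →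
      EuclideanSpace ℝ (Fin n) :=
    fun p => bpt n (a p.1) p.2.1 (extSign p.2.1 p.2.2) with hF_def
  set P : Finset (Σ ν : Fin (μ+1), (Fin n → ZMod 2) × (Fin (ns ν) → ZMod 2)) :=
    Finset.univ.sigma fun ν => (C ν) ×ˢ (S ν) with hP_def
  have hmemP : ∀ p : (Σ ν : Fin (μ+1), (Fin n → ZMod 2) × (Fin (ns ν) → ZMod 2)),
      p ∈ P ↔ p.2.1 ∈ C p.1 ∧ p.2.2 ∈ S p.1 := by
    intro p
    simp [hP_def, Finset.mem_sigma, Finset.mem_product]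
  have hwt : ∀ (ν : Fin (μ+1)), ∀ c ∈ C ν,
      ({j | c j ≠ 0} : Finset (Fin n)).card = ns ν := fun ν c hc => hCweight ν c hc
  have hnormsq : ∀ p ∈ P, ∑ i, (F p i)^2 = (ns 0 : ℝ) := by
    intro p hp
    obtain ⟨hc, hs⟩ := (hmemP p).mp hp
    rw [hF_def, sum_sq_bpt, hCweight _ _ hc, ha2]
    have hne : (ns p.1 : ℝ) ≠ 0 := by
      have := hpos p.1; positivity
    rw [mul_comm, div_mul_cancel₀ _ hne]
  -- cross-level distance bound
  have hcross : ∀ p q, p ∈ P → q ∈ P → p.1 < q.1 →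
      (ns 0 : ℝ) ≤ ∑ i, (F p i - F q i)^2 := by
    intro p q hp hq hlt
    obtain ⟨hc, _⟩ := (hmemP p).mp hp
    obtain ⟨hc', _⟩ := (hmemP q).mp hq
    have hb := dist_sq_cross (hapos p.1).le (hapos q.1).le
      p.2.1 (extSign p.2.1 p.2.2) q.2.1 (extSign q.2.1 q.2.2)
    rw [hCweight _ _ hc, hCweight _ _ hc', ha2, ha2] at hb
    have h4 : 4 * ns q.1 ≤ ns p.1 := hfour _ _ hlt
    -- the cross term bound
    have hterm : (ns q.1 : ℝ) * (a p.1 * a q.1) ≤ (ns 0 : ℝ) / 2 := by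
      have hmul : a p.1 * a q.1
          = Real.sqrt (((ns 0 : ℝ) / ns p.1) * ((ns 0 : ℝ) / ns q.1)) :=
        (Real.sqrt_mul (hdivpos p.1).le _).symm
      have hq1 : (0:ℝ) < ns q.1 := by exact_mod_cast hpos q.1
      have hp1 : (0:ℝ) < ns p.1 := by exact_mod_cast hpos p.1
      have hn00 : (0:ℝ) ≤ ns 0 := by positivity
      have hsq : ((ns 0 : ℝ) / ns p.1) * ((ns 0 : ℝ) / ns q.1)
          ≤ ((ns 0 : ℝ) / (2 * ns q.1))^2 := by
        rw [div_mul_div_comm, div_pow, ← sq]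
        apply div_le_div_of_nonneg_left (by positivity) (by positivity)
        have h4' : (4:ℝ) * ns q.1 ≤ ns p.1 := by exact_mod_cast h4
        nlinarith [hq1]
      have := Real.sqrt_le_sqrt hsq
      rw [Real.sqrt_sq (by positivity)] at this
      calc (ns q.1 : ℝ) * (a p.1 * a q.1)
          ≤ (ns q.1 : ℝ) * ((ns 0 : ℝ) / (2 * ns q.1)) := by
            rw [hmul]; exact mul_le_mul_of_nonneg_left this hq1.le
        _ = (ns 0 : ℝ) / 2 := by field_simp
    have hnep : (ns p.1 : ℝ) ≠ 0 := by have := hpos p.1; positivity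
    have hneq : (ns q.1 : ℝ) ≠ 0 := by have := hpos q.1; positivity
    have hns0 : (ns 0 : ℝ) / ns p.1 * ns p.1 = (ns 0 : ℝ) :=
      div_mul_cancel₀ _ hnep
    have hns0' : (ns 0 : ℝ) / ns q.1 * ns q.1 = (ns 0 : ℝ) :=
      div_mul_cancel₀ _ hneq
    nlinarith [hb, hterm]
  -- main distance bound on parameters
  have hkey : ∀ p ∈ P, ∀ q ∈ P, p ≠ q → (ns 0 : ℝ) ≤ ∑ i, (F p i - F q i)^2 := by
    intro p hp q hq hne
    rcases lt_trichotomy p.1 q.1 with hlt | heq | hgt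
    · exact hcross p q hp hq hlt
    · -- same level
      obtain ⟨ν, c, s⟩ := p
      obtain ⟨ν', c', s'⟩ := q
      dsimp at heq
      subst heq
      obtain ⟨hc, hs⟩ := (hmemP ⟨ν, c, s⟩).mp hp
      obtain ⟨hc', hs'⟩ := (hmemP ⟨ν, c', s'⟩).mp hq
      by_cases hcc : c = c'
      · subst hcc
        have hss : s ≠ s' := by
          intro h; exact hne (by rw [h])
        have hd := hSdist ν s hs s' hs' hss
        have hc0 : ({j | c j ≠ 0} : Finset (Fin n)).card = ns ν := hwt ν c hc
        rw [hF_def]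
        dsimp only
        rw [dist_sq_same_support (a ν) c hc0 s s']
        have hle : (ns ν : ℝ) ≤ 4 * (hammingDist s s' : ℝ) := by
          have h1 : ns ν ≤ 4 * ((ns ν + 3) / 4) := by omega
          have h2 : (ns ν + 3) / 4 ≤ hammingDist s s' := hd
          have : ns ν ≤ 4 * hammingDist s s' := by omega
          exact_mod_cast this
        have := ha2 ν
        have hnsν : (0:ℝ) < ns ν := by exact_mod_cast hpos ν
        have heq0 : (a ν)^2 * (ns ν : ℝ) = (ns 0 : ℝ) := by
          rw [this]; exact div_mul_cancel₀ _ hnsν.ne'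
        nlinarith [sq_nonneg (a ν), hapos ν]
      · have hd := hCdist ν c hc c' hc' hcc
        have hb := dist_sq_diff_support (a ν) c c' (extSign c s) (extSign c' s')
        rw [hF_def]
        dsimp only
        have hle : (ns ν : ℝ) ≤ (hammingDist c c' : ℝ) := by exact_mod_cast hd
        have hnsν : (0:ℝ) < ns ν := by exact_mod_cast hpos ν
        have heq0 : (a ν)^2 * (ns ν : ℝ) = (ns 0 : ℝ) := by
          rw [ha2 ν]; exact div_mul_cancel₀ _ hnsν.ne'
        nlinarith [hb, sq_nonneg (a ν), hapos ν]
    · have := hcross q p hq hp hgt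
      calc (ns 0 : ℝ) ≤ ∑ i, (F q i - F p i)^2 := this
        _ = ∑ i, (F p i - F q i)^2 := Finset.sum_congr rfl fun i _ => by ring
  -- distances
  have hdist : ∀ p ∈ P, ∀ q ∈ P, p ≠ q →
      Real.sqrt (ns 0) ≤ dist (F p) (F q) := by
    intro p hp q hq hne
    rw [EuclideanSpace.dist_eq]
    have : ∀ i, dist (F p i) (F q i)^2 = (F p i - F q i)^2 := by
      intro i; rw [Real.dist_eq, sq_abs]
    rw [Finset.sum_congr rfl fun i _ => this i]
    exact Real.sqrt_le_sqrt (hkey p hp q hq hne)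
  have hsqrtpos : (0:ℝ) < Real.sqrt (ns 0) :=
    Real.sqrt_pos.mpr (by exact_mod_cast hpos 0)
  have hinj : Set.InjOn F P := by
    intro p hp q hq hFeq
    by_contra hne
    have := hdist p hp q hq hne
    rw [hFeq, dist_self] at this
    linarith
  refine ⟨P.image F, ?_, ?_, ?_, ?_⟩
  · rw [Finset.card_image_of_injOn hinj, hP_def, Finset.card_sigma]
    exact Finset.sum_congr rfl fun ν _ => by
      rw [Finset.card_product, hCcard, hScard]
  · intro x hx
    obtain ⟨p, hp, rfl⟩ := Finset.mem_image.mp hx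
    rw [EuclideanSpace.norm_eq]
    congr 1
    rw [← hnormsq p hp]
    exact Finset.sum_congr rfl fun i _ => by rw [Real.norm_eq_abs, sq_abs]
  · intro x hx y hy hne
    obtain ⟨p, hp, rfl⟩ := Finset.mem_image.mp hx
    obtain ⟨q, hq, rfl⟩ := Finset.mem_image.mp hy
    exact hdist p hp q hq (fun h => hne (by rw [h]))
  · intro x hx
    obtain ⟨p, hp, rfl⟩ := Finset.mem_image.mp hx
    obtain ⟨hc, hs⟩ := (hmemP p).mp hp
    refine ⟨p.1, ?_, ?_⟩
    · have hiff : ∀ i, F p i ≠ 0 ↔ p.2.1 i ≠ 0 := by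
        intro i
        rw [hF_def]
        dsimp only
        rw [bpt_apply]
        constructor
        · intro h
          by_contra hc0
          rw [if_neg (not_not.mpr hc0)] at h
          exact h rfl
        · intro h
          rw [if_pos h]
          exact mul_ne_zero (sgn2_ne_zero _) (hapos p.1).ne'
      rw [Finset.filter_congr (fun i _ => by rw [hiff i] : ∀ i ∈ Finset.univ,
        (F p i ≠ 0) ↔ (p.2.1 i ≠ 0))]
      exact hCweight _ _ hc
    · intro i hi
      have hci : p.2.1 i ≠ 0 := by
        by_contra hc0
        apply hi
        rw [hF_def]
        dsimp only
        rw [bpt_apply, if_neg (not_not.mpr hc0)]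
      have : F p i = sgn2 (extSign p.2.1 p.2.2 i) * a p.1 := by
        rw [hF_def]; dsimp only; rw [bpt_apply, if_pos hci]
      rw [this]
      rcases (by unfold sgn2; split <;> simp :
          sgn2 (extSign p.2.1 p.2.2 i) = 1 ∨ sgn2 (extSign p.2.1 p.2.2 i) = -1) with h | h
      · left; rw [h, one_mul]
      · right; rw [h, neg_one_mul]
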